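/- Let P_k ∈ M_N(ℂ) denote the orthogonal projection onto the span of the first k standard basis vectors, 1 ≤ k ≤ N. Then for each k < N, P_k ∈ P_{k+1}^⊥ but P_k ∉ P_k^⊥; hence the outgoing Birkhoff–James neighborhoods P_1^⊥ ⊊ P_2^⊥ ⊊ ⋯ ⊊ P_N^⊥ form a chain of length N. -/

import Mathlib

open scoped Matrix.Norms.L2Operator Matrix

/-- Action of a complex matrix on Euclidean space. -/
noncomputable def mulE {n : ℕ} (A : Matrix (Fin n) (Fin n) ℂ)
    (u : EuclideanSpace ℂ (Fin n)) : EuclideanSpace ℂ (Fin n) :=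
  Matrix.toEuclideanCLM (𝕜 := ℂ) A u

/-- The set of norm-attaining vectors of `A`. -/
noncomputable def M₀ {n : ℕ} (A : Matrix (Fin n) (Fin n) ℂ) :
    Set (EuclideanSpace ℂ (Fin n)) :=
  {u | ‖mulE A u‖ = ‖A‖ * ‖u‖}

/-- Birkhoff–James orthogonality in `M_n(ℂ)` with the operator norm. -/
noncomputable def BJ {n : ℕ} (A B : Matrix (Fin n) (Fin n) ℂ) : Prop :=
  ∀ c : ℂ, ‖A‖ ≤ ‖A + c • B‖

/-- The outgoing BJ neighborhood `A^⊥`. -/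
noncomputable def orthSet {n : ℕ} (A : Matrix (Fin n) (Fin n) ℂ) :
    Set (Matrix (Fin n) (Fin n) ℂ) :=
  {B | BJ A B}

/-- `Pk N k` is the orthogonal projection onto the span of the first `k+1`
standard basis vectors of `ℂ^N`. -/
noncomputable def Pk (N : ℕ) (k : Fin N) : Matrix (Fin N) (Fin N) ℂ :=
  Matrix.diagonal (fun i => if (i : ℕ) ≤ (k : ℕ) then 1 else 0)

/- ### Auxiliary lemmas -/

lemma mulE_add {n : ℕ} (A B : Matrix (Fin n) (Fin n) ℂ) (u : EuclideanSpace ℂ (Fin n)) :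
    mulE (A + B) u = mulE A u + mulE B u := by
  simp [mulE, map_add]

lemma mulE_sub {n : ℕ} (A B : Matrix (Fin n) (Fin n) ℂ) (u : EuclideanSpace ℂ (Fin n)) :
    mulE (A - B) u = mulE A u - mulE B u := by
  simp [mulE, map_sub]

lemma mulE_smul {n : ℕ} (c : ℂ) (A : Matrix (Fin n) (Fin n) ℂ) (u : EuclideanSpace ℂ (Fin n)) :
    mulE (c • A) u = c • mulE A u := by
  simp [mulE, map_smul]

lemma mulE_le {n : ℕ} (A : Matrix (Fin n) (Fin n) ℂ) (u : EuclideanSpace ℂ (Fin n)) :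
    ‖mulE A u‖ ≤ ‖A‖ * ‖u‖ :=
  (Matrix.toEuclideanCLM (𝕜 := ℂ) A).le_opNorm u

lemma norm_le_of_forall {n : ℕ} (A : Matrix (Fin n) (Fin n) ℂ) (r : ℝ) (hr : 0 ≤ r)
    (h : ∀ u : EuclideanSpace ℂ (Fin n), ‖mulE A u‖ ≤ r * ‖u‖) : ‖A‖ ≤ r :=
  ContinuousLinearMap.opNorm_le_bound _ hr h

lemma mulE_diag_apply {n : ℕ} (d : Fin n → ℂ) (u : EuclideanSpace ℂ (Fin n)) (l : Fin n) :
    mulE (Matrix.diagonal d) u l = d l * u l := by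
  show (Matrix.diagonal d).mulVec (fun m => u m) l = _
  rw [Matrix.mulVec_diagonal]

lemma mulE_diag_single {n : ℕ} (d : Fin n → ℂ) (i : Fin n) (a : ℂ) :
    mulE (Matrix.diagonal d) (EuclideanSpace.single i a) = EuclideanSpace.single i (d i * a) := by
  ext l
  rw [mulE_diag_apply]
  show d l * EuclideanSpace.single i a l = EuclideanSpace.single i (d i * a) l
  rw [EuclideanSpace.single_apply, EuclideanSpace.single_apply]
  split_ifs with h
  · subst h; ring
  · ring

lemma norm_sq_eq {n : ℕ} (x : EuclideanSpace ℂ (Fin n)) :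
    ‖x‖ ^ 2 = ∑ l, ‖x l‖ ^ 2 := by
  rw [EuclideanSpace.norm_eq, Real.sq_sqrt (by positivity)]

lemma norm_Pk (N : ℕ) (k : Fin N) : ‖Pk N k‖ = 1 := by
  have hub : ‖Pk N k‖ ≤ 1 := by
    apply norm_le_of_forall _ _ zero_le_one
    intro u
    rw [one_mul]
    have h2 : ‖mulE (Pk N k) u‖ ^ 2 ≤ ‖u‖ ^ 2 := by
      rw [norm_sq_eq, norm_sq_eq]
      apply Finset.sum_le_sum
      intro l _
      rw [Pk, mulE_diag_apply]
      split_ifs with h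
      · simp
      · simp
    exact le_of_pow_le_pow_left₀ two_ne_zero (norm_nonneg u) h2
  have hlb : (1 : ℝ) ≤ ‖Pk N k‖ := by
    have h1 : mulE (Pk N k) (EuclideanSpace.single k 1) = EuclideanSpace.single k 1 := by
      rw [Pk, mulE_diag_single]
      simp
    have h2 := mulE_le (Pk N k) (EuclideanSpace.single k 1)
    rw [h1, EuclideanSpace.norm_single] at h2
    simpa using h2
  linarith

lemma mem_orth_of_lt {N : ℕ} (i j : Fin N) (hij : (i : ℕ) < (j : ℕ)) :
    Pk N i ∈ orthSet (Pk N j) := by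
  intro c
  rw [norm_Pk]
  have h1 : mulE (Pk N j + c • Pk N i) (EuclideanSpace.single j 1)
      = EuclideanSpace.single j 1 := by
    rw [mulE_add, mulE_smul, Pk, Pk, mulE_diag_single, mulE_diag_single]
    have hj : ¬ ((j : ℕ) ≤ (i : ℕ)) := not_le.mpr hij
    have hz : EuclideanSpace.single j (0 : ℂ) = 0 := by
      ext l; rw [EuclideanSpace.single_apply]; simp
    simp [hj, hz]
  have h2 := mulE_le (Pk N j + c • Pk N i) (EuclideanSpace.single j 1)
  rw [h1, EuclideanSpace.norm_single] at h2
  simpa using h2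

lemma not_mem_orth_self {N : ℕ} (k : Fin N) : Pk N k ∉ orthSet (Pk N k) := by
  intro h
  have := h (-1)
  rw [norm_Pk] at this
  simp only [neg_smul, one_smul, add_neg_cancel, norm_zero] at this
  linarith

lemma key_sq {N : ℕ} (i j : Fin N) (hij : (i : ℕ) ≤ (j : ℕ)) (u : EuclideanSpace ℂ (Fin N)) :
    ‖mulE (Pk N i) u‖ ^ 2 + ‖mulE (Pk N j - Pk N i) u‖ ^ 2 ≤ ‖u‖ ^ 2 := by
  rw [norm_sq_eq, norm_sq_eq, norm_sq_eq, ← Finset.sum_add_distrib]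
  apply Finset.sum_le_sum
  intro l _
  rw [mulE_sub]
  show ‖mulE (Pk N i) u l‖ ^ 2 + ‖mulE (Pk N j) u l - mulE (Pk N i) u l‖ ^ 2 ≤ ‖u l‖ ^ 2
  rw [Pk, Pk, mulE_diag_apply, mulE_diag_apply]
  by_cases h1 : (l : ℕ) ≤ (i : ℕ)
  · have h2 : (l : ℕ) ≤ (j : ℕ) := h1.trans hij
    simp [h1, h2]
  · by_cases h2 : (l : ℕ) ≤ (j : ℕ)
    · simp [h1, h2]
    · simp [h1, h2]

lemma orth_mono {N : ℕ} (i j : Fin N) (hij : (i : ℕ) ≤ (j : ℕ)) :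
    orthSet (Pk N i) ⊆ orthSet (Pk N j) := by
  intro B hB c
  by_contra hlt
  push_neg at hlt
  rw [norm_Pk] at hlt
  set s := ‖Pk N j + c • B‖ with hs
  have hs0 : 0 ≤ s := norm_nonneg _
  set t : ℝ := (1 - s) / 2 with ht
  have ht0 : 0 < t := by rw [ht]; linarith
  have ht2 : t ≤ 1 / 2 := by rw [ht]; linarith
  set τ : ℂ := ((t : ℝ) : ℂ) with hτ
  set σ : ℂ := (((1 - t : ℝ)) : ℂ) with hσ
  have hστ : σ = 1 - τ := by rw [hσ, hτ]; push_cast; ring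
  have M : Pk N i + (τ * c) • B
      = σ • Pk N i + τ • (Pk N j + c • B) - τ • (Pk N j - Pk N i) := by
    rw [hστ]; module
  have hnτ : ‖τ‖ = t := by rw [hτ, Complex.norm_real, Real.norm_eq_abs, abs_of_pos ht0]
  have hnσ : ‖σ‖ = 1 - t := by rw [hσ, Complex.norm_real, Real.norm_eq_abs, abs_of_nonneg (by linarith)]
  have hub : ‖Pk N i + (τ * c) • B‖ ≤ 1 - t + t ^ 2 + t * s := by
    apply norm_le_of_forall _ _ (by nlinarith)
    intro u
    set a := ‖mulE (Pk N i) u‖ with ha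
    set b := ‖mulE (Pk N j - Pk N i) u‖ with hb
    have ha0 : 0 ≤ a := norm_nonneg _
    have hb0 : 0 ≤ b := norm_nonneg _
    have hn0 : 0 ≤ ‖u‖ := norm_nonneg _
    have hab : a ^ 2 + b ^ 2 ≤ ‖u‖ ^ 2 := key_sq i j hij u
    have hm : ‖mulE (Pk N j + c • B) u‖ ≤ s * ‖u‖ := mulE_le _ u
    have step1 : ‖mulE (Pk N i + (τ * c) • B) u‖
        ≤ (1 - t) * a + t * (s * ‖u‖) + t * b := by
      rw [M, mulE_sub, mulE_add, mulE_smul, mulE_smul, mulE_smul]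
      calc ‖σ • mulE (Pk N i) u + τ • mulE (Pk N j + c • B) u
            - τ • mulE (Pk N j - Pk N i) u‖
          ≤ ‖σ • mulE (Pk N i) u + τ • mulE (Pk N j + c • B) u‖
            + ‖τ • mulE (Pk N j - Pk N i) u‖ := norm_sub_le _ _
        _ ≤ ‖σ • mulE (Pk N i) u‖ + ‖τ • mulE (Pk N j + c • B) u‖
            + ‖τ • mulE (Pk N j - Pk N i) u‖ := by
              gcongr; exact norm_add_le _ _
        _ = (1 - t) * a + t * ‖mulE (Pk N j + c • B) u‖ + t * b := by
              rw [norm_smul, norm_smul, norm_smul, hnσ, hnτ]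
        _ ≤ (1 - t) * a + t * (s * ‖u‖) + t * b := by
              gcongr
    have cs : (1 - t) * a + t * b ≤ (1 - t + t ^ 2) * ‖u‖ := by
      have hL : 0 ≤ (1 - t) * a + t * b := by nlinarith
      have hR : 0 ≤ (1 - t + t ^ 2) * ‖u‖ := by nlinarith
      have hsq : ((1 - t) * a + t * b) ^ 2 ≤ ((1 - t + t ^ 2) * ‖u‖) ^ 2 := by
        nlinarith [sq_nonneg ((1 - t) * b - t * a), sq_nonneg (t * (1 - t) * ‖u‖),
          mul_nonneg (mul_nonneg ht0.le (by linarith : (0:ℝ) ≤ 1 - t)) (sq_nonneg ‖u‖),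
          sq_nonneg ‖u‖]
      exact le_of_pow_le_pow_left₀ two_ne_zero hR hsq
    calc ‖mulE (Pk N i + (τ * c) • B) u‖
        ≤ (1 - t) * a + t * (s * ‖u‖) + t * b := step1
      _ ≤ (1 - t + t ^ 2) * ‖u‖ + t * s * ‖u‖ := by linarith [cs]
      _ = (1 - t + t ^ 2 + t * s) * ‖u‖ := by ring
  have hBc := hB (τ * c)
  rw [norm_Pk] at hBc
  have hts : 1 - t + t ^ 2 + t * s = 1 - t ^ 2 := by rw [ht]; ring
  rw [hts] at hub
  nlinarith

theorem projection_chain (N : ℕ) :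
    (∀ i j : Fin N, (i : ℕ) + 1 = (j : ℕ) → Pk N i ∈ orthSet (Pk N j)) ∧
      (∀ k : Fin N, Pk N k ∉ orthSet (Pk N k)) ∧
      (∀ i j : Fin N, i < j → orthSet (Pk N i) ⊂ orthSet (Pk N j)) := by
  refine ⟨fun i j h => mem_orth_of_lt i j (by omega), not_mem_orth_self, fun i j hij => ?_⟩
  have hij' : (i : ℕ) < (j : ℕ) := hij
  refine (Set.ssubset_iff_of_subset (orth_mono i j hij'.le)).mpr
    ⟨Pk N i, mem_orth_of_lt i j hij', not_mem_orth_self i⟩
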